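/- If x̂ ∈ S is a weak efficient solution of (P) and both the weak Abadie data qualification (WADQ) and the closed cone constraint qualification (CCCQ) hold at x̂, then the weak KKT condition holds at x̂. -/

import Mathlib

open Set Filter Topology
open scoped RealInnerProductSpace Pointwise

noncomputable section

namespace MOSIP

variable {n : ℕ} {T : Type*} {p : ℕ}

/-- The decision space `ℝ^n`. -/
abbrev Eucl (n : ℕ) := EuclideanSpace ℝ (Fin n)

/-- Subdifferential of a real-valued function. -/
def subdiff (h : Eucl n → ℝ) (x : Eucl n) : Set (Eucl n) :=
  {ξ | ∀ y, h x + ⟪ξ, y - x⟫ ≤ h y}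

/-- Subdifferential of an extended-real-valued function. -/
def subdiffE (h : Eucl n → EReal) (x : Eucl n) : Set (Eucl n) :=
  {ξ | ∀ y, h x + ((⟪ξ, y - x⟫ : ℝ) : EReal) ≤ h y}

/-- Convexity of an extended-real-valued function. -/
def ConvexE (h : Eucl n → EReal) : Prop :=
  ∀ x y : Eucl n, ∀ a b : ℝ, 0 ≤ a → 0 ≤ b → a + b = 1 →
    h (a • x + b • y) ≤ (a : EReal) * h x + (b : EReal) * h y

/-- Proper (with values in `ℝ ∪ {+∞}`): never `−∞` and not identically `+∞`. -/
def ProperE (h : Eucl n → EReal) : Prop :=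
  (∀ x, h x ≠ ⊥) ∧ (∃ x, h x ≠ ⊤)

/-- Feasible set `S` of the problem `(P)`. -/
def feasSet (g : T → Eucl n → EReal) : Set (Eucl n) := {x | ∀ t, g t x ≤ 0}

/-- Active indices `T(x)`. -/
def activeIx (g : T → Eucl n → EReal) (x : Eucl n) : Set T := {t | g t x = 0}

/-- `ε`-active indices `T_ε(x)`. -/
def activeIxEps (g : T → Eucl n → EReal) (x : Eucl n) (ε : ℝ) : Set T :=
  {t | ((-ε : ℝ) : EReal) ≤ g t x}

/-- `F(xh) = ⋃ i, ∂f_i(xh)`. -/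
def FSet (f : Fin p → Eucl n → ℝ) (x : Eucl n) : Set (Eucl n) := ⋃ i, subdiff (f i) x

/-- `G(xh) = ⋃_{t ∈ T(xh)} ∂g_t(xh)`. -/
def GSet (g : T → Eucl n → EReal) (x : Eucl n) : Set (Eucl n) :=
  ⋃ t ∈ activeIx g x, subdiffE (g t) x

/-- The smallest convex cone containing `M` and `0`: all finite nonnegative combinations. -/
def coneHull (M : Set (Eucl n)) : Set (Eucl n) :=
  {x | ∃ (s : Finset (Eucl n)) (c : Eucl n → ℝ), ↑s ⊆ M ∧ (∀ v ∈ s, 0 ≤ c v) ∧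
    x = ∑ v ∈ s, c v • v}

/-- Negative polar cone `M⁰`. -/
def negPolar (M : Set (Eucl n)) : Set (Eucl n) := {d | ∀ ξ ∈ M, ⟪ξ, d⟫ ≤ 0}

/-- Strictly negative polar cone `M⁻`. -/
def strictNegPolar (M : Set (Eucl n)) : Set (Eucl n) := {d | ∀ ξ ∈ M, ⟪ξ, d⟫ < 0}

/-- Contingent (Bouligand tangent) cone of `M` at `x`. -/
def contingentCone (M : Set (Eucl n)) (x : Eucl n) : Set (Eucl n) :=
  {v | ∃ (τ : ℕ → ℝ) (w : ℕ → Eucl n), (∀ r, 0 < τ r) ∧ Tendsto τ atTop (𝓝 0) ∧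
    Tendsto w atTop (𝓝 v) ∧ ∀ r, x + τ r • w r ∈ M}

/-- Normal cone `N(M, x) := C(M, x)⁰`. -/
def normalCone (M : Set (Eucl n)) (x : Eucl n) : Set (Eucl n) :=
  negPolar (contingentCone M x)

/-- Weak efficient solution. -/
def WeakEff (f : Fin p → Eucl n → ℝ) (S : Set (Eucl n)) (xh : Eucl n) : Prop :=
  ¬ ∃ x ∈ S, ∀ i, f i x < f i xh

/-- Efficient solution. -/
def Eff (f : Fin p → Eucl n → ℝ) (S : Set (Eucl n)) (xh : Eucl n) : Prop :=
  ¬ ∃ x ∈ S, (∀ i, f i x ≤ f i xh) ∧ ∃ j, f j x < f j xh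

/-- Isolated efficient solution with constant `ν`:
`max_i (f_i(x) − f_i(xh)) ≥ ν‖x − xh‖` on `S`. -/
def IsolatedEff (f : Fin p → Eucl n → ℝ) (S : Set (Eucl n)) (xh : Eucl n) (ν : ℝ) : Prop :=
  ∀ x ∈ S, ∃ i, ν * ‖x - xh‖ ≤ f i x - f i xh

/-- `w ∈ Σ α_i ∂f_i(xh) + Σ_{t ∈ T*} β_t ∂g_t(xh)` with multipliers as described,
where `Nonneg`/`Pos` refers to the sign condition on the `α_i`. -/
def KKTPoint (f : Fin p → Eucl n → ℝ) (g : T → Eucl n → EReal) (xh : Eucl n)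
    (w : Eucl n) : Prop :=
  ∃ (α : Fin p → ℝ) (Ts : Finset T) (β : T → ℝ) (ξ : Fin p → Eucl n) (ζ : T → Eucl n),
    (∀ i, 0 ≤ α i) ∧ ∑ i, α i = 1 ∧ (∀ t ∈ Ts, t ∈ activeIx g xh) ∧
    (∀ t ∈ Ts, 0 ≤ β t) ∧ (∀ i, ξ i ∈ subdiff (f i) xh) ∧
    (∀ t ∈ Ts, ζ t ∈ subdiffE (g t) xh) ∧
    ∑ i, α i • ξ i + ∑ t ∈ Ts, β t • ζ t = w

/-- The weak KKT condition at `xh`. -/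
def WeakKKT (f : Fin p → Eucl n → ℝ) (g : T → Eucl n → EReal) (xh : Eucl n) : Prop :=
  KKTPoint f g xh 0

/-- The strong KKT condition at `xh` (all objective multipliers positive). -/
def StrongKKT (f : Fin p → Eucl n → ℝ) (g : T → Eucl n → EReal) (xh : Eucl n) : Prop :=
  ∃ (α : Fin p → ℝ) (Ts : Finset T) (β : T → ℝ) (ξ : Fin p → Eucl n) (ζ : T → Eucl n),
    (∀ i, 0 < α i) ∧ ∑ i, α i = 1 ∧ (∀ t ∈ Ts, t ∈ activeIx g xh) ∧
    (∀ t ∈ Ts, 0 ≤ β t) ∧ (∀ i, ξ i ∈ subdiff (f i) xh) ∧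
    (∀ t ∈ Ts, ζ t ∈ subdiffE (g t) xh) ∧
    ∑ i, α i • ξ i + ∑ t ∈ Ts, β t • ζ t = 0

/-- The perturbed KKT condition at `xh` with constant `ν`. -/
def PerturbedKKT (f : Fin p → Eucl n → ℝ) (g : T → Eucl n → EReal) (xh : Eucl n)
    (ν : ℝ) : Prop :=
  ∀ w : Eucl n, ‖w‖ ≤ ν → KKTPoint f g xh w

/-- The gap function `ϑ(x, ξ, λ) = sup_{y ∈ S} Σ_i λ_i ⟪ξ_i, x − y⟫`. -/
def gapFn (S : Set (Eucl n)) (x : Eucl n) (ξ : Fin p → Eucl n) (lam : Fin p → ℝ) : EReal :=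
  ⨆ y ∈ S, ((∑ i, lam i * ⟪ξ i, x - y⟫ : ℝ) : EReal)

/-- The unit simplex of multipliers. -/
def simplex (lam : Fin p → ℝ) : Prop := (∀ i, 0 ≤ lam i) ∧ ∑ i, lam i = 1

/-- Supremum (marginal) function `ψ(x) = sup_t g_t(x)`. -/
def supFn (g : T → Eucl n → EReal) (x : Eucl n) : EReal := ⨆ t, g t x

/-- Directional derivative of a convex extended-real-valued function,
`h'(x; d) = inf_{τ > 0} (h(x + τ d) − h(x))/τ` (the limit as `τ ↓ 0`). -/
def dirDeriv (h : Eucl n → EReal) (x d : Eucl n) : EReal :=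
  ⨅ τ ∈ Ioi (0 : ℝ), (h (x + τ • d) - h x) * ((τ⁻¹ : ℝ) : EReal)

/-- Every constraint is (real-valued and) continuously differentiable around `xh`,
with gradient `gr t` at `xh`. -/
def SmoothConstraintsAt (g : T → Eucl n → EReal) (gr : T → Eucl n) (xh : Eucl n) : Prop :=
  ∀ t, ∃ (h : Eucl n → ℝ) (U : Set (Eucl n)), U ∈ 𝓝 xh ∧ (∀ y ∈ U, g t y = (h y : EReal)) ∧
    ContDiffOn ℝ 1 h U ∧ gradient h xh = gr t

/-- Slater CQ. -/
def SCQ (g : T → Eucl n → EReal) : Prop := ∃ x₀ : Eucl n, ∀ t, g t x₀ < 0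

/-- Mangasarian–Fromovitz CQ at `xh`. -/
def MFCQ (g : T → Eucl n → EReal) (xh : Eucl n) : Prop :=
  (GSet g xh).Nonempty ∧ (strictNegPolar (GSet g xh)).Nonempty

/-- Perturbed Mangasarian–Fromovitz CQ at `xh`. -/
def PMFCQ (g : T → Eucl n → EReal) (xh : Eucl n) : Prop :=
  ∃ xs : Eucl n,
    (⨅ ε ∈ Ioi (0 : ℝ), ⨆ ξ ∈ ⋃ t ∈ activeIxEps g xh ε, subdiffE (g t) xh,
      ((⟪ξ, xs⟫ : ℝ) : EReal)) < 0

/-- Local Farkas–Minkowski CQ at `xh`. -/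
def LFMCQ (g : T → Eucl n → EReal) (xh : Eucl n) : Prop :=
  normalCone (feasSet g) xh = coneHull (GSet g xh)

/-- Closed cone CQ at `xh`. -/
def CCCQ (g : T → Eucl n → EReal) (xh : Eucl n) : Prop :=
  IsClosed (coneHull (GSet g xh))

/-- Abadie CQ at `xh`. -/
def ACQ (g : T → Eucl n → EReal) (xh : Eucl n) : Prop :=
  (GSet g xh).Nonempty ∧ negPolar (GSet g xh) ⊆ contingentCone (feasSet g) xh

/-- Kuhn–Tucker CQ at `xh`. -/
def KTCQ (g : T → Eucl n → EReal) (xh : Eucl n) : Prop :=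
  {d | dirDeriv (supFn g) xh d ≤ 0} ⊆ contingentCone (feasSet g) xh

/-- Pshenichnyi–Levin–Valadier CQ at `xh`. -/
def PLVCQ (g : T → Eucl n → EReal) (xh : Eucl n) : Prop :=
  subdiffE (supFn g) xh ⊆ coneHull (GSet g xh)

/-- Weak Abadie DQ at `xh`. -/
def WADQ (f : Fin p → Eucl n → ℝ) (g : T → Eucl n → EReal) (xh : Eucl n) : Prop :=
  (GSet g xh).Nonempty ∧
    strictNegPolar (FSet f xh) ∩ negPolar (GSet g xh) ⊆ contingentCone (feasSet g) xh

/-- The sublevel sets `Q^i(xh)`. -/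
def QSet (f : Fin p → Eucl n → ℝ) (S : Set (Eucl n)) (xh : Eucl n) (i : Fin p) :
    Set (Eucl n) :=
  {x ∈ S | ∀ l, l ≠ i → f l x ≤ f l xh}

/-- Extended Abadie DQ at `xh`. -/
def EADQ (f : Fin p → Eucl n → ℝ) (g : T → Eucl n → EReal) (xh : Eucl n) : Prop :=
  (GSet g xh).Nonempty ∧
    negPolar (FSet f xh) ∩ negPolar (GSet g xh) ⊆
      ⋂ i, contingentCone (QSet f (feasSet g) xh i) xh

/-- Maeda objective qualification at `xh`. -/
def MOQ (f : Fin p → Eucl n → ℝ) (xh : Eucl n) : Prop :=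
  negPolar (FSet f xh) ⊆ {0} ∪ ⋃ i, strictNegPolar (subdiff (f i) xh)

variable {n p : ℕ} {T : Type*}

/-- basic convex interpolation inequality -/
lemma seg_le {f : Eucl n → ℝ} (hf : ConvexOn ℝ Set.univ f) (x v : Eucl n)
    {σ τ : ℝ} (hσ : 0 < σ) (hστ : σ ≤ τ) :
    f (x + σ • v) - f x ≤ (σ / τ) * (f (x + τ • v) - f x) := by
  have hτ : 0 < τ := lt_of_lt_of_le hσ hστ
  have hb : 0 ≤ σ / τ := by positivity
  have ha : 0 ≤ 1 - σ / τ := by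
    have : σ / τ ≤ 1 := (div_le_one hτ).2 hστ
    linarith
  have h := hf.2 (Set.mem_univ x) (Set.mem_univ (x + τ • v)) ha hb (by ring)
  have hx : (1 - σ / τ) • x + (σ / τ) • (x + τ • v) = x + σ • v := by
    have hmul : (σ / τ) * τ = σ := div_mul_cancel₀ σ hτ.ne'
    rw [smul_add, smul_smul, hmul]
    module
  rw [hx, smul_eq_mul, smul_eq_mul] at h
  nlinarith [h]

lemma seg_lt {f : Eucl n → ℝ} (hf : ConvexOn ℝ Set.univ f) (x v : Eucl n)
    {σ τ : ℝ} (hσ : 0 < σ) (hστ : σ ≤ τ) (h : f (x + τ • v) < f x) :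
    f (x + σ • v) < f x := by
  have h1 := seg_le hf x v hσ hστ
  have hτ : 0 < τ := lt_of_lt_of_le hσ hστ
  have h2 : (σ / τ) * (f (x + τ • v) - f x) < 0 :=
    mul_neg_of_pos_of_neg (by positivity) (by linarith)
  linarith

/-- difference quotient -/
def dirQ (f : Eucl n → ℝ) (x v : Eucl n) (τ : ℝ) : ℝ := (f (x + τ • v) - f x) / τ

lemma dirQ_mono {f : Eucl n → ℝ} (hf : ConvexOn ℝ Set.univ f) (x v : Eucl n)
    {σ τ : ℝ} (hσ : 0 < σ) (hστ : σ ≤ τ) : dirQ f x v σ ≤ dirQ f x v τ := by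
  have hτ : 0 < τ := lt_of_lt_of_le hσ hστ
  have h := seg_le hf x v hσ hστ
  rw [dirQ, dirQ, div_le_div_iff₀ hσ hτ]
  have h2 : (σ / τ) * (f (x + τ • v) - f x) * τ = (f (x + τ • v) - f x) * σ := by
    field_simp
  nlinarith [mul_le_mul_of_nonneg_right h hτ.le, h2]

lemma dirQ_mid {f : Eucl n → ℝ} (hf : ConvexOn ℝ Set.univ f) (x v : Eucl n)
    {τ : ℝ} (hτ : 0 < τ) : 0 ≤ dirQ f x v τ + dirQ f x (-v) τ := by
  have h := hf.2 (Set.mem_univ (x + τ • v)) (Set.mem_univ (x + τ • (-v)))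
    (by norm_num : (0:ℝ) ≤ 1/2) (by norm_num : (0:ℝ) ≤ 1/2) (by norm_num)
  have hx : (1/2 : ℝ) • (x + τ • v) + (1/2 : ℝ) • (x + τ • (-v)) = x := by module
  rw [hx, smul_eq_mul, smul_eq_mul] at h
  rw [dirQ, dirQ, ← add_div]
  exact div_nonneg (by linarith) hτ.le

lemma dirQ_bddBelow {f : Eucl n → ℝ} (hf : ConvexOn ℝ Set.univ f) (x v : Eucl n) :
    BddBelow (dirQ f x v '' Ioi 0) := by
  refine ⟨-(dirQ f x (-v) 1), ?_⟩
  rintro y ⟨τ, hτ, rfl⟩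
  rw [mem_Ioi] at hτ
  rcases le_total τ 1 with h1 | h1
  · have := dirQ_mid hf x v hτ
    have h2 := dirQ_mono hf x (-v) hτ h1
    linarith
  · have := dirQ_mid hf x v one_pos
    have h2 := dirQ_mono hf x v one_pos h1
    linarith

lemma dirQ_nonempty (f : Eucl n → ℝ) (x v : Eucl n) :
    (dirQ f x v '' Ioi 0).Nonempty := ⟨dirQ f x v 1, 1, by norm_num, rfl⟩

/-- directional derivative -/
def phi (f : Eucl n → ℝ) (x v : Eucl n) : ℝ := sInf (dirQ f x v '' Ioi 0)

lemma phi_le_dirQ {f : Eucl n → ℝ} (hf : ConvexOn ℝ Set.univ f) (x v : Eucl n)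
    {τ : ℝ} (hτ : 0 < τ) : phi f x v ≤ dirQ f x v τ :=
  csInf_le (dirQ_bddBelow hf x v) ⟨τ, hτ, rfl⟩

lemma phi_le_sub {f : Eucl n → ℝ} (hf : ConvexOn ℝ Set.univ f) (x v : Eucl n) :
    phi f x v ≤ f (x + v) - f x := by
  have := phi_le_dirQ hf x v one_pos
  simpa [dirQ] using this

lemma phi_zero (f : Eucl n → ℝ) (x : Eucl n) : phi f x 0 = 0 := by
  have himg : dirQ f x 0 '' Ioi 0 = {0} := by
    have h : ∀ τ : ℝ, dirQ f x 0 τ = 0 := fun τ => by simp [dirQ]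
    ext y
    constructor
    · rintro ⟨τ, hτ, rfl⟩; simp [h]
    · rintro rfl; exact ⟨1, by norm_num, h 1⟩
  rw [phi, himg, csInf_singleton]

lemma dirQ_smul (f : Eucl n → ℝ) (x v : Eucl n) {c τ : ℝ} (hc : 0 < c) (hτ : 0 < τ) :
    dirQ f x (c • v) τ = c * dirQ f x v (c * τ) := by
  rw [dirQ, dirQ, smul_smul, mul_comm τ c]
  field_simp

lemma phi_smul {f : Eucl n → ℝ} (x v : Eucl n) {c : ℝ} (hc : 0 < c) :
    phi f x (c • v) = c * phi f x v := by
  have himg : dirQ f x (c • v) '' Ioi 0 = c • (dirQ f x v '' Ioi 0) := by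
    ext y
    constructor
    · rintro ⟨τ, hτ, rfl⟩
      rw [mem_Ioi] at hτ
      exact ⟨dirQ f x v (c * τ), ⟨c * τ, mem_Ioi.2 (by positivity), rfl⟩, (dirQ_smul f x v hc hτ).symm⟩
    · rintro ⟨z, ⟨τ, hτ, rfl⟩, rfl⟩
      rw [mem_Ioi] at hτ
      refine ⟨τ / c, mem_Ioi.2 (by positivity), ?_⟩
      rw [dirQ_smul f x v hc (by positivity), mul_div_cancel₀ _ hc.ne']
      rfl
  rw [phi, himg, Real.sInf_smul_of_nonneg hc.le]
  rfl

lemma phi_add {f : Eucl n → ℝ} (hf : ConvexOn ℝ Set.univ f) (x v w : Eucl n) :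
    phi f x (v + w) ≤ phi f x v + phi f x w := by
  by_contra hcon
  push_neg at hcon
  set ε := phi f x (v + w) - (phi f x v + phi f x w) with hε
  have hεpos : 0 < ε := by simp [hε]; linarith
  obtain ⟨y1, ⟨τ1, hτ1, rfl⟩, h1⟩ := exists_lt_of_csInf_lt (dirQ_nonempty f x v)
    (show sInf (dirQ f x v '' Ioi 0) < phi f x v + ε/2 by
      change phi f x v < _; linarith)
  obtain ⟨y2, ⟨τ2, hτ2, rfl⟩, h2⟩ := exists_lt_of_csInf_lt (dirQ_nonempty f x w)
    (show sInf (dirQ f x w '' Ioi 0) < phi f x w + ε/2 by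
      change phi f x w < _; linarith)
  rw [mem_Ioi] at hτ1 hτ2
  set τ := min τ1 τ2 with hτdef
  have hτ : 0 < τ := lt_min hτ1 hτ2
  have key : dirQ f x (v + w) (τ/2) ≤ dirQ f x v τ + dirQ f x w τ := by
    have h := hf.2 (Set.mem_univ (x + τ • v)) (Set.mem_univ (x + τ • w))
      (by norm_num : (0:ℝ) ≤ 1/2) (by norm_num : (0:ℝ) ≤ 1/2) (by norm_num)
    have hx : (1/2 : ℝ) • (x + τ • v) + (1/2 : ℝ) • (x + τ • w) = x + (τ/2) • (v + w) := by
      module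
    rw [hx, smul_eq_mul, smul_eq_mul] at h
    rw [dirQ, dirQ, dirQ, ← add_div, div_le_div_iff₀ (by positivity) hτ]
    nlinarith [mul_le_mul_of_nonneg_right h hτ.le, hτ]
  have c1 : phi f x (v + w) ≤ dirQ f x (v + w) (τ/2) := phi_le_dirQ hf x (v+w) (by positivity)
  have c2 : dirQ f x v τ ≤ dirQ f x v τ1 := dirQ_mono hf x v hτ (min_le_left _ _)
  have c3 : dirQ f x w τ ≤ dirQ f x w τ2 := dirQ_mono hf x w hτ (min_le_right _ _)
  linarith

/-- Hahn–Banach: subgradient attaining the directional derivative. -/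
lemma exists_subgrad {f : Eucl n → ℝ} (hf : ConvexOn ℝ Set.univ f) (x : Eucl n)
    (d : Eucl n) (hd : d ≠ 0) :
    ∃ ξ ∈ subdiff f x, ⟪ξ, d⟫ = phi f x d := by
  have H : ∀ c : ℝ, c • d = 0 → (RingHom.id ℝ) c • phi f x d = 0 := by
    intro c hc
    rcases smul_eq_zero.1 hc with h | h
    · simp [h]
    · exact absurd h hd
  have hφc : ∀ c : ℝ, c * phi f x d ≤ phi f x (c • d) := by
    intro c
    rcases lt_trichotomy c 0 with hc | hc | hc
    · have h1 : 0 ≤ phi f x (c • d) + phi f x ((-c) • d) := by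
        have := phi_add hf x (c • d) ((-c) • d)
        have h0 : c • d + (-c) • d = 0 := by module
        rw [h0, phi_zero] at this
        linarith
      rw [phi_smul x d (by linarith : (0:ℝ) < -c)] at h1
      linarith
    · simp [hc, phi_zero]
    · rw [phi_smul x d hc]
  have hfle : ∀ z : (LinearPMap.mkSpanSingleton' d (phi f x d) H).domain,
      (LinearPMap.mkSpanSingleton' d (phi f x d) H) z ≤ phi f x z := by
    rintro ⟨zv, hzv⟩
    obtain ⟨c, hc⟩ := Submodule.mem_span_singleton.1 hzv
    have hzv' : c • d ∈ (LinearPMap.mkSpanSingleton' d (phi f x d) H).domain := by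
      rw [hc]; exact hzv
    have heq : (⟨zv, hzv⟩ : (LinearPMap.mkSpanSingleton' d (phi f x d) H).domain)
        = ⟨c • d, hzv'⟩ := Subtype.ext hc.symm
    rw [heq, LinearPMap.mkSpanSingleton'_apply]
    simpa using hφc c
  obtain ⟨gl, hg1, hg2⟩ := exists_extension_of_le_sublinear
    (LinearPMap.mkSpanSingleton' d (phi f x d) H) (phi f x)
    (fun c hc y => by rw [phi_smul x y hc]) (phi_add hf x) hfle
  have hmem : d ∈ (LinearPMap.mkSpanSingleton' d (phi f x d) H).domain :=
    Submodule.mem_span_singleton_self d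
  have hgd : gl d = phi f x d := by
    have h := hg1 ⟨d, hmem⟩
    rwa [LinearPMap.mkSpanSingleton'_apply_self] at h
  set ξ := (InnerProductSpace.toDual ℝ (Eucl n)).symm
    (LinearMap.toContinuousLinearMap gl) with hξ
  have hinner : ∀ y : Eucl n, ⟪ξ, y⟫ = gl y := by
    intro y
    rw [hξ]
    exact InnerProductSpace.toDual_symm_apply
  refine ⟨ξ, ?_, by rw [hinner, hgd]⟩
  intro y
  have h1 : gl (y - x) ≤ phi f x (y - x) := hg2 (y - x)
  have h2 : phi f x (y - x) ≤ f (x + (y - x)) - f x := phi_le_sub hf x (y - x)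
  rw [add_sub_cancel] at h2
  rw [hinner]
  linarith

/-- if every subgradient is strictly negative along `d`, the function decreases along `d`. -/
lemma exists_decrease {f : Eucl n → ℝ} (hf : ConvexOn ℝ Set.univ f) (x d : Eucl n)
    (hd : d ≠ 0) (h : ∀ ξ ∈ subdiff f x, ⟪ξ, d⟫ < 0) :
    ∃ τ : ℝ, 0 < τ ∧ f (x + τ • d) < f x := by
  by_contra hcon
  push_neg at hcon
  have hphi : 0 ≤ phi f x d := by
    apply le_csInf (dirQ_nonempty f x d)
    rintro y ⟨τ, hτ, rfl⟩
    rw [mem_Ioi] at hτ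
    have := hcon τ hτ
    rw [dirQ]
    exact div_nonneg (by linarith) hτ.le
  obtain ⟨ξ, hξ, hval⟩ := exists_subgrad hf x d hd
  have := h ξ hξ
  rw [hval] at this
  linarith

lemma subdiff_convex (f : Eucl n → ℝ) (x : Eucl n) : Convex ℝ (subdiff f x) := by
  intro ξ hξ ζ hζ a b ha hb hab
  intro y
  have h1 := hξ y
  have h2 := hζ y
  have : ⟪a • ξ + b • ζ, y - x⟫ = a * ⟪ξ, y - x⟫ + b * ⟪ζ, y - x⟫ := by
    rw [inner_add_left, real_inner_smul_left, real_inner_smul_left]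
  rw [this]
  have e1 := mul_le_mul_of_nonneg_left h1 ha
  have e2 := mul_le_mul_of_nonneg_left h2 hb
  have e3 : a * f x + b * f x = f x := by rw [← add_mul, hab, one_mul]
  have e4 : a * f y + b * f y = f y := by rw [← add_mul, hab, one_mul]
  nlinarith [e1, e2, e3, e4]

lemma subdiff_closed (f : Eucl n → ℝ) (x : Eucl n) : IsClosed (subdiff f x) := by
  have : subdiff f x = ⋂ y, {ξ : Eucl n | f x + ⟪ξ, y - x⟫ ≤ f y} := by
    ext ξ; simp [subdiff, Set.mem_iInter]
  rw [this]
  refine isClosed_iInter fun y => isClosed_le ?_ continuous_const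
  exact continuous_const.add (Continuous.inner continuous_id continuous_const)

lemma subdiff_compact {f : Eucl n → ℝ} (hf : ConvexOn ℝ Set.univ f) (x : Eucl n) :
    IsCompact (subdiff f x) := by
  have hcont : Continuous f := by
    rw [← continuousOn_univ]
    exact hf.continuousOn isOpen_univ
  obtain ⟨z, hz, hM⟩ := (isCompact_closedBall x 1).exists_isMaxOn
    ⟨x, Metric.mem_closedBall_self zero_le_one⟩ hcont.continuousOn
  have hsub : subdiff f x ⊆ Metric.closedBall 0 (f z - f x) := by
    intro ξ hξ
    rw [Metric.mem_closedBall, dist_zero_right]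
    rcases eq_or_ne ξ 0 with rfl | hξ0
    · have hle : f x ≤ f z := hM (Metric.mem_closedBall_self zero_le_one)
      simp only [norm_zero]
      linarith
    · have hnrm : ‖(‖ξ‖⁻¹ : ℝ) • ξ‖ = 1 := by
        rw [norm_smul, norm_inv, norm_norm, inv_mul_cancel₀ (norm_ne_zero_iff.2 hξ0)]
      have hy : x + ‖ξ‖⁻¹ • ξ ∈ Metric.closedBall x 1 := by
        rw [Metric.mem_closedBall, dist_eq_norm, add_sub_cancel_left, hnrm]
      have h1 := hξ (x + ‖ξ‖⁻¹ • ξ)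
      have h2 : ⟪ξ, x + ‖ξ‖⁻¹ • ξ - x⟫ = ‖ξ‖ := by
        rw [add_sub_cancel_left, real_inner_smul_right, real_inner_self_eq_norm_sq,
          inv_mul_eq_div, sq, mul_div_assoc, div_self (norm_ne_zero_iff.2 hξ0), mul_one]
      rw [h2] at h1
      have hle : f (x + ‖ξ‖⁻¹ • ξ) ≤ f z := hM hy
      linarith
  exact (isCompact_closedBall 0 _).of_isClosed_subset (subdiff_closed f x) hsub

lemma subdiff_nonempty {f : Eucl n → ℝ} (hf : ConvexOn ℝ Set.univ f) (x : Eucl n)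
    (hn : 1 ≤ n) : (subdiff f x).Nonempty := by
  set d : Eucl n := EuclideanSpace.single (⟨0, hn⟩ : Fin n) (1:ℝ) with hd
  have hdne : d ≠ 0 := by
    intro h
    have : d (⟨0, hn⟩ : Fin n) = 1 := by simp [hd]
    rw [h] at this
    simp at this
  obtain ⟨ξ, hξ, -⟩ := exists_subgrad hf x d hdne
  exact ⟨ξ, hξ⟩


lemma subdiffE_convex {g : Eucl n → EReal} {x : Eucl n} (hx : g x = 0) :
    Convex ℝ (subdiffE g x) := by
  intro ξ hξ ζ hζ a b ha hb hab y
  have hξ' := hξ y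
  have hζ' := hζ y
  rw [hx, zero_add] at hξ' hζ' ⊢
  by_cases htop : g y = ⊤
  · rw [htop]; exact le_top
  · have hbot : g y ≠ ⊥ := by
      intro hb'
      rw [hb'] at hξ'
      exact (EReal.coe_ne_bot _) (le_bot_iff.1 hξ')
    obtain ⟨r, hr⟩ : ∃ r : ℝ, g y = (r : ℝ) := ⟨(g y).toReal, (EReal.coe_toReal htop hbot).symm⟩
    rw [hr] at hξ' hζ' ⊢
    rw [EReal.coe_le_coe_iff] at hξ' hζ' ⊢
    have hin : ⟪a • ξ + b • ζ, y - x⟫ = a * ⟪ξ, y - x⟫ + b * ⟪ζ, y - x⟫ := by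
      rw [inner_add_left, real_inner_smul_left, real_inner_smul_left]
    rw [hin]
    have e1 := mul_le_mul_of_nonneg_left hξ' ha
    have e2 := mul_le_mul_of_nonneg_left hζ' hb
    have e3 : a * r + b * r = r := by rw [← add_mul, hab, one_mul]
    linarith

lemma zero_mem_coneHull (M : Set (Eucl n)) : (0 : Eucl n) ∈ coneHull M :=
  ⟨∅, fun _ => 0, by simp, by simp, by simp⟩

lemma subset_coneHull (M : Set (Eucl n)) : M ⊆ coneHull M := by
  intro z hz
  exact ⟨{z}, fun _ => 1, by simpa, fun v _ => zero_le_one, by simp⟩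

lemma smul_mem_coneHull {M : Set (Eucl n)} {c : ℝ} (hc : 0 ≤ c) {z : Eucl n}
    (hz : z ∈ coneHull M) : c • z ∈ coneHull M := by
  obtain ⟨s, cw, hs, hcw, rfl⟩ := hz
  refine ⟨s, fun v => c * cw v, hs, fun v hv => mul_nonneg hc (hcw v hv), ?_⟩
  rw [Finset.smul_sum]
  refine Finset.sum_congr rfl fun v _ => ?_
  show c • cw v • v = (c * cw v) • v
  rw [smul_smul]

lemma coneHull_convex (M : Set (Eucl n)) : Convex ℝ (coneHull M) := by
  classical
  rintro x ⟨s1, c1, hs1, hc1, rfl⟩ y ⟨s2, c2, hs2, hc2, rfl⟩ a b ha hb hab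
  refine ⟨s1 ∪ s2,
    fun v => a * (if v ∈ s1 then c1 v else 0) + b * (if v ∈ s2 then c2 v else 0), ?_, ?_, ?_⟩
  · intro v hv
    rcases Finset.mem_union.1 (by exact_mod_cast hv) with h | h
    · exact hs1 h
    · exact hs2 h
  · intro v _
    have h1 : (0:ℝ) ≤ (if v ∈ s1 then c1 v else 0) := by
      split_ifs with h
      · exact hc1 v h
      · exact le_rfl
    have h2 : (0:ℝ) ≤ (if v ∈ s2 then c2 v else 0) := by
      split_ifs with h
      · exact hc2 v h
      · exact le_rfl
    exact add_nonneg (mul_nonneg ha h1) (mul_nonneg hb h2)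
  · have e1 : ∑ v ∈ s1, c1 v • v = ∑ v ∈ s1 ∪ s2, (if v ∈ s1 then c1 v else 0) • v := by
      rw [← Finset.sum_subset Finset.subset_union_left (fun v _ hv => by simp [hv])]
      exact Finset.sum_congr rfl fun v hv => by simp [hv]
    have e2 : ∑ v ∈ s2, c2 v • v = ∑ v ∈ s1 ∪ s2, (if v ∈ s2 then c2 v else 0) • v := by
      rw [← Finset.sum_subset Finset.subset_union_right (fun v _ hv => by simp [hv])]
      exact Finset.sum_congr rfl fun v hv => by simp [hv]
    rw [e1, e2, Finset.smul_sum, Finset.smul_sum, ← Finset.sum_add_distrib]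
    exact Finset.sum_congr rfl fun v _ => by rw [smul_smul, smul_smul, add_smul]


/-- If `x̂ ∈ S` is a weak efficient solution of `(P)` and both WADQ and CCCQ
hold at `x̂`, then the weak KKT condition holds at `x̂`. -/
theorem stmt2
    (hn : 1 ≤ n) (hp : 1 ≤ p)
    (f : Fin p → Eucl n → ℝ) (g : T → Eucl n → EReal)
    (hf : ∀ i, ConvexOn ℝ Set.univ (f i))
    (hgconv : ∀ t, ConvexE (g t))
    (hgproper : ∀ t, ProperE (g t))
    (hglsc : ∀ t, LowerSemicontinuous (g t))
    (xh : Eucl n) (hxS : xh ∈ feasSet g)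
    (hweak : WeakEff f (feasSet g) xh)
    (hwadq : WADQ f g xh) (hcccq : CCCQ g xh) :
    WeakKKT f g xh := by
  classical
  haveI hp' : Nonempty (Fin p) := ⟨⟨0, hp⟩⟩
  set i0 : Fin p := ⟨0, hp⟩ with hi0
  have hsubne : ∀ i, (subdiff (f i) xh).Nonempty := fun i => subdiff_nonempty (hf i) xh hn
  choose ξ0 hξ0 using hsubne
  obtain ⟨ξG, hξG⟩ := hwadq.1
  obtain ⟨t0, ht0, hξGt⟩ := Set.mem_iUnion₂.1 hξG
  -- the compact convex set of weighted subgradient combinations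
  set A : Set (Eucl n) := {w | ∃ (α : Fin p → ℝ) (ξ : Fin p → Eucl n),
    (∀ i, 0 ≤ α i) ∧ ∑ i, α i = 1 ∧ (∀ i, ξ i ∈ subdiff (f i) xh) ∧ w = ∑ i, α i • ξ i}
    with hAdef
  have hFA : FSet f xh ⊆ A := by
    intro ξ' hξ'
    obtain ⟨i, hi⟩ := Set.mem_iUnion.1 hξ'
    refine ⟨fun j => if j = i then 1 else 0, fun j => if j = i then ξ' else ξ0 j,
      ?_, by simp, ?_, ?_⟩
    · intro j
      by_cases h : j = i <;> simp [h]
    · intro j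
      by_cases h : j = i
      · subst h; simpa using hi
      · simpa [h] using hξ0 j
    · rw [Finset.sum_eq_single_of_mem i (Finset.mem_univ i)
        (fun j _ hj => by simp [hj])]
      simp
  have hAconv : Convex ℝ A := by
    rintro w1 ⟨α1, ξ1, hα1n, hα1s, hξ1, rfl⟩ w2 ⟨α2, ξ2, hα2n, hα2s, hξ2, rfl⟩ a b ha hb hab
    refine ⟨fun i => a * α1 i + b * α2 i,
      fun i => if h : a * α1 i + b * α2 i = 0 then ξ0 i else
        (a * α1 i + b * α2 i)⁻¹ • ((a * α1 i) • ξ1 i + (b * α2 i) • ξ2 i),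
      fun i => add_nonneg (mul_nonneg ha (hα1n i)) (mul_nonneg hb (hα2n i)), ?_, ?_, ?_⟩
    · rw [Finset.sum_add_distrib, ← Finset.mul_sum, ← Finset.mul_sum, hα1s, hα2s,
        mul_one, mul_one, hab]
    · intro i
      by_cases h : a * α1 i + b * α2 i = 0
      · simpa [h] using hξ0 i
      · have hpos : 0 < a * α1 i + b * α2 i :=
          lt_of_le_of_ne (add_nonneg (mul_nonneg ha (hα1n i)) (mul_nonneg hb (hα2n i)))
            (Ne.symm h)
        have hsum1 : (a * α1 i + b * α2 i)⁻¹ * (a * α1 i)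
            + (a * α1 i + b * α2 i)⁻¹ * (b * α2 i) = 1 := by
          rw [← mul_add]
          exact inv_mul_cancel₀ h
        have hmem := subdiff_convex (f i) xh (hξ1 i) (hξ2 i)
          (mul_nonneg (inv_nonneg.2 hpos.le) (mul_nonneg ha (hα1n i)))
          (mul_nonneg (inv_nonneg.2 hpos.le) (mul_nonneg hb (hα2n i))) hsum1
        show (if h : a * α1 i + b * α2 i = 0 then ξ0 i else
          (a * α1 i + b * α2 i)⁻¹ • ((a * α1 i) • ξ1 i + (b * α2 i) • ξ2 i))
          ∈ subdiff (f i) xh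
        rw [dif_neg h, smul_add, smul_smul, smul_smul]
        exact hmem
    · rw [Finset.smul_sum, Finset.smul_sum, ← Finset.sum_add_distrib]
      refine Finset.sum_congr rfl fun i _ => ?_
      rw [smul_smul, smul_smul]
      by_cases h : a * α1 i + b * α2 i = 0
      · have h1 : a * α1 i = 0 := by
          nlinarith [mul_nonneg ha (hα1n i), mul_nonneg hb (hα2n i)]
        have h2 : b * α2 i = 0 := by
          nlinarith [mul_nonneg ha (hα1n i), mul_nonneg hb (hα2n i)]
        simp [h, h1, h2]
      · simp only [dif_neg h]
        rw [smul_inv_smul₀ h]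
  have hAcomp : IsCompact A := by
    have himg : A = (fun q : (Fin p → ℝ) × (Fin p → Eucl n) => ∑ i, q.1 i • q.2 i) ''
        ((stdSimplex ℝ (Fin p)) ×ˢ (Set.univ.pi fun i => subdiff (f i) xh)) := by
      ext w
      constructor
      · rintro ⟨α, ξ, h1, h2, h3, rfl⟩
        exact ⟨(α, ξ), ⟨⟨h1, h2⟩, fun i _ => h3 i⟩, rfl⟩
      · rintro ⟨⟨α, ξ⟩, ⟨⟨h1, h2⟩, h3⟩, rfl⟩
        exact ⟨α, ξ, h1, h2, fun i => h3 i (Set.mem_univ i), rfl⟩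
    rw [himg]
    exact ((isCompact_stdSimplex _ _).prod
        (isCompact_univ_pi fun i => subdiff_compact (hf i) xh)).image
      (continuous_finset_sum _ fun i _ =>
        (((continuous_apply i).comp continuous_fst).smul
          ((continuous_apply i).comp continuous_snd)))
  -- no direction is simultaneously strictly F-negative and G-nonpositive
  have hempty : ∀ d, d ∈ strictNegPolar (FSet f xh) → d ∈ negPolar (GSet g xh) → False := by
    intro d hdF hdG
    by_cases hd0 : d = 0
    · have hmem : ξ0 i0 ∈ FSet f xh := Set.mem_iUnion.2 ⟨i0, hξ0 i0⟩
      have h := hdF _ hmem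
      rw [hd0, inner_zero_right] at h
      exact lt_irrefl 0 h
    obtain ⟨τs, ws, hτpos, hτ0, hwd, hfeas⟩ := hwadq.2 ⟨hdF, hdG⟩
    have hstrict : ∀ i, ∀ ξ' ∈ subdiff (f i) xh, ⟪ξ', d⟫ < 0 :=
      fun i ξ' h' => hdF _ (Set.mem_iUnion.2 ⟨i, h'⟩)
    choose τi hτipos hτidec using fun i => exists_decrease (hf i) xh d hd0 (hstrict i)
    set τm := Finset.univ.inf' Finset.univ_nonempty τi with hτm
    have hτmpos : 0 < τm := (Finset.lt_inf'_iff _).2 fun i _ => hτipos i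
    have hτmle : ∀ i, τm ≤ τi i := fun i => Finset.inf'_le _ (Finset.mem_univ i)
    have hdec : ∀ i, f i (xh + τm • d) < f i xh :=
      fun i => seg_lt (hf i) xh d hτmpos (hτmle i) (hτidec i)
    have hcont : ∀ i : Fin p, Continuous fun w : Eucl n => f i (xh + τm • w) := by
      intro i
      have hci : Continuous (f i) := by
        rw [← continuousOn_univ]
        exact (hf i).continuousOn isOpen_univ
      exact hci.comp (continuous_const.add (continuous_id.const_smul τm))
    have hev1 : ∀ᶠ r in atTop, ∀ i, f i (xh + τm • ws r) < f i xh := by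
      rw [eventually_all]
      intro i
      exact (((hcont i).tendsto d).comp hwd).eventually_lt_const (hdec i)
    have hev2 : ∀ᶠ r in atTop, τs r < τm := hτ0.eventually_lt_const hτmpos
    obtain ⟨r, h1, h2⟩ := (hev1.and hev2).exists
    apply hweak
    exact ⟨xh + τs r • ws r, hfeas r,
      fun i => seg_lt (hf i) xh (ws r) (hτpos r) h2.le (h1 i)⟩
  -- separation
  have hnd : ¬ Disjoint A {z : Eucl n | -z ∈ coneHull (GSet g xh)} := by
    intro hdis
    have hnegconv : Convex ℝ {z : Eucl n | -z ∈ coneHull (GSet g xh)} := by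
      intro z1 h1 z2 h2 a b ha hb hab
      have he : -(a • z1 + b • z2) = a • (-z1) + b • (-z2) := by module
      show -(a • z1 + b • z2) ∈ coneHull (GSet g xh)
      rw [he]
      exact coneHull_convex (GSet g xh) h1 h2 ha hb hab
    have hnegclosed : IsClosed {z : Eucl n | -z ∈ coneHull (GSet g xh)} :=
      IsClosed.preimage continuous_neg hcccq
    obtain ⟨ℓ, u, v, hau, huv, hbv⟩ :=
      geometric_hahn_banach_compact_closed hAconv hAcomp hnegconv hnegclosed hdis
    have hv0 : v < 0 := by
      have h0 := hbv 0 (by simpa using zero_mem_coneHull (GSet g xh))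
      rwa [map_zero] at h0
    set dvec := (InnerProductSpace.toDual ℝ (Eucl n)).symm ℓ with hdv
    have hdvec : ∀ y, ⟪dvec, y⟫ = ℓ y := fun y => InnerProductSpace.toDual_symm_apply
    apply hempty dvec
    · intro ξ' hξ'
      have h := hau ξ' (hFA hξ')
      rw [real_inner_comm, hdvec]
      linarith
    · intro η hη
      rw [real_inner_comm, hdvec]
      by_contra hpos
      push_neg at hpos
      set cns := (-v) / (ℓ η) with hcns
      have hc : 0 < cns := div_pos (by linarith) hpos
      have hmem : -(-(cns • η)) ∈ coneHull (GSet g xh) := by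
        rw [neg_neg]
        exact smul_mem_coneHull hc.le (subset_coneHull _ hη)
      have hb2 := hbv (-(cns • η)) hmem
      rw [map_neg, map_smul, smul_eq_mul] at hb2
      have hcl : cns * ℓ η = -v := div_mul_cancel₀ _ (ne_of_gt hpos)
      rw [hcl] at hb2
      linarith
  obtain ⟨w, hwA, hwB⟩ := Set.not_disjoint_iff.1 hnd
  obtain ⟨α, ξ, hα0, hα1, hξmem, hw⟩ := hwA
  obtain ⟨s, c, hsG, hc0, hsum⟩ := hwB
  -- group the cone combination by active index
  have hGmem : ∀ z ∈ GSet g xh, ∃ t, t ∈ activeIx g xh ∧ z ∈ subdiffE (g t) xh := by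
    intro z hz
    obtain ⟨t, ht, hzt⟩ := Set.mem_iUnion₂.1 hz
    exact ⟨t, ht, hzt⟩
  set tfun : Eucl n → T := fun z =>
    if h : ∃ t, t ∈ activeIx g xh ∧ z ∈ subdiffE (g t) xh then h.choose else t0 with htfun_def
  have htfun : ∀ z ∈ GSet g xh, tfun z ∈ activeIx g xh ∧ z ∈ subdiffE (g (tfun z)) xh := by
    intro z hz
    have h := hGmem z hz
    simp only [htfun_def, dif_pos h]
    exact h.choose_spec
  have hsmem : ∀ z ∈ s, z ∈ GSet g xh := fun z hz => hsG (Finset.mem_coe.2 hz)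
  set β : T → ℝ := fun t => ∑ z ∈ s.filter (fun z => tfun z = t), c z with hβdef
  set ζ : T → Eucl n :=
    fun t => (β t)⁻¹ • ∑ z ∈ s.filter (fun z => tfun z = t), c z • z with hζdef
  set Ts : Finset T := (s.image tfun).filter (fun t => β t ≠ 0) with hTsdef
  have hβ0 : ∀ t, 0 ≤ β t :=
    fun t => Finset.sum_nonneg fun z hz => hc0 z (Finset.mem_filter.1 hz).1
  refine ⟨α, Ts, β, ξ, ζ, hα0, hα1, ?_, fun t _ => hβ0 t, hξmem, ?_, ?_⟩
  · intro t ht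
    obtain ⟨htim, -⟩ := Finset.mem_filter.1 ht
    obtain ⟨z, hzs, rfl⟩ := Finset.mem_image.1 htim
    exact (htfun z (hsmem z hzs)).1
  · intro t ht
    obtain ⟨htim, hβne⟩ := Finset.mem_filter.1 ht
    have hactive : g t xh = 0 := by
      obtain ⟨z, hzs, rfl⟩ := Finset.mem_image.1 htim
      exact (htfun z (hsmem z hzs)).1
    have hζeq : ζ t = ∑ z ∈ s.filter (fun z => tfun z = t), ((β t)⁻¹ * c z) • z := by
      rw [hζdef]
      simp only
      rw [Finset.smul_sum]
      exact Finset.sum_congr rfl fun z _ => smul_smul _ _ _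
    rw [hζeq]
    refine (subdiffE_convex hactive).sum_mem
      (fun z hz => mul_nonneg (inv_nonneg.2 (hβ0 t)) (hc0 z (Finset.mem_filter.1 hz).1))
      (by rw [← Finset.mul_sum]; exact inv_mul_cancel₀ hβne) ?_
    intro z hz
    obtain ⟨hzs, hzt⟩ := Finset.mem_filter.1 hz
    have h := (htfun z (hsmem z hzs)).2
    rwa [hzt] at h
  · have step1 : ∀ t ∈ s.image tfun,
        β t • ζ t = ∑ z ∈ s.filter (fun z => tfun z = t), c z • z := by
      intro t _
      by_cases hβ : β t = 0
      · have hz0 : ∀ z ∈ s.filter (fun z => tfun z = t), c z = 0 :=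
          (Finset.sum_eq_zero_iff_of_nonneg
            (fun z hz => hc0 z (Finset.mem_filter.1 hz).1)).1 hβ
        rw [hβ, zero_smul]
        exact (Finset.sum_eq_zero fun z hz => by rw [hz0 z hz, zero_smul]).symm
      · exact smul_inv_smul₀ hβ _
    have step2 : ∑ t ∈ Ts, β t • ζ t = ∑ t ∈ s.image tfun, β t • ζ t := by
      apply Finset.sum_subset (Finset.filter_subset _ _)
      intro t htim htnot
      have hβ : β t = 0 := by
        by_contra hne
        exact htnot (Finset.mem_filter.2 ⟨htim, hne⟩)
      rw [hβ, zero_smul]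
    have step3 : ∑ t ∈ s.image tfun, ∑ z ∈ s.filter (fun z => tfun z = t), c z • z
        = ∑ z ∈ s, c z • z :=
      Finset.sum_fiberwise_of_maps_to (fun z hz => Finset.mem_image_of_mem tfun hz) _
    have hfin : ∑ t ∈ Ts, β t • ζ t = -w := by
      rw [step2, Finset.sum_congr rfl step1, step3]
      exact hsum.symm
    rw [hfin, ← hw]
    exact add_neg_cancel w


end MOSIP
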